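/- Let X be an extended quasi-metric space. For x ∈ X let ε_x ∈ MH^0_0(X) be the class of the cochain δ_x taking value 1 on the 0-simplex (x) and 0 on all other 0-simplices. Then the map x ↦ ε_x is a bijection from X onto the set of primitive idempotents of the ring MH^0_0(X); and for any x, y ∈ X and ℓ ∈ (0,∞), the subgroup ε_x · MH^1_ℓ(X) · ε_y of MH^1_ℓ(X) is nonzero if and only if x and y are adjacent with d(x,y) = ℓ. -/

import Mathlib

/-! Core definitions: magnitude (co)homology of generalised metric spaces. -/

open scoped ENNReal NNReal Classical
noncomputable section

/-- A generalised metric space (extended pseudo-quasi-metric space):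
a set with a distance in `[0,∞]` satisfying `d x x = 0` and the triangle
inequality, but not necessarily symmetry or separation. -/
structure GMS (X : Type*) where
  d : X → X → ℝ≥0∞
  d_self : ∀ x, d x x = 0
  d_triangle : ∀ x y z, d x z ≤ d x y + d y z

variable {X : Type*}

/-- An extended quasi-metric space: distinct points are at nonzero distance. -/
def GMS.Quasi (M : GMS X) : Prop := ∀ x y, M.d x y = 0 → x = y

/-- Consecutive entries of the tuple are distinct, i.e. it is a simplex. -/
def SepTuple {k : ℕ} (x : Fin (k + 1) → X) : Prop :=
  ∀ i : Fin k, x i.castSucc ≠ x i.succ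

/-- The length of a tuple: the sum of consecutive distances. -/
def GMS.len (M : GMS X) {k : ℕ} (x : Fin (k + 1) → X) : ℝ≥0∞ :=
  ∑ i : Fin k, M.d (x i.castSucc) (x i.succ)

/-- A `k`-simplex of length `ℓ` in the generalised metric space `M`. -/
structure MSimplex (M : GMS X) (k : ℕ) (ℓ : ℝ≥0) where
  pts : Fin (k + 1) → X
  sep : SepTuple pts
  len_eq : M.len pts = (ℓ : ℝ≥0∞)

/-- The magnitude chain group `MC_{k,ℓ}`: the free abelian group on the
`k`-simplices of length `ℓ`. -/
abbrev MC (M : GMS X) (k : ℕ) (ℓ : ℝ≥0) := MSimplex M k ℓ →₀ ℤ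

/-- The magnitude cochain group `MC^k_ℓ = Hom(MC_{k,ℓ}, ℤ)`, identified with
the group of all `ℤ`-valued functions on `k`-simplices of length `ℓ`. -/
abbrev MCo (M : GMS X) (k : ℕ) (ℓ : ℝ≥0) := MSimplex M k ℓ → ℤ

/-- Remove the `(j+1)`-st point (an inner point) from a tuple. -/
def faceTuple {k : ℕ} (x : Fin (k + 2) → X) (j : Fin k) : Fin (k + 1) → X :=
  x ∘ Fin.succAbove ⟨j.val + 1, by have := j.isLt; omega⟩

/-- The condition under which the inner face `∂_{j+1}` of a simplex is a simplex
of the same length: the removed point lies on a geodesic between its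
neighbours (and, redundantly in quasi-metric spaces, the face is again a
simplex of the same length). -/
def GMS.FaceOK (M : GMS X) {k : ℕ} {ℓ : ℝ≥0} (s : MSimplex M (k + 1) ℓ) (j : Fin k) : Prop :=
  M.d (s.pts ⟨j.val, by have := j.isLt; omega⟩) (s.pts ⟨j.val + 2, by have := j.isLt; omega⟩) =
      M.d (s.pts ⟨j.val, by have := j.isLt; omega⟩) (s.pts ⟨j.val + 1, by have := j.isLt; omega⟩) +
      M.d (s.pts ⟨j.val + 1, by have := j.isLt; omega⟩) (s.pts ⟨j.val + 2, by have := j.isLt; omega⟩)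
    ∧ SepTuple (faceTuple s.pts j) ∧ M.len (faceTuple s.pts j) = (ℓ : ℝ≥0∞)

/-- The inner face `∂_{j+1}` of a simplex, when defined. -/
def GMS.face (M : GMS X) {k : ℕ} {ℓ : ℝ≥0} (s : MSimplex M (k + 1) ℓ) (j : Fin k)
    (h : M.FaceOK s j) : MSimplex M k ℓ :=
  ⟨faceTuple s.pts j, h.2.1, h.2.2⟩

/-- The magnitude coboundary `∂^* : MC^k_ℓ → MC^{k+1}_ℓ`, dual to the
differential `∂ = -∂_1 + ∂_2 - ⋯ + (-1)^k ∂_k`. -/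
def MCoDelta (M : GMS X) (k : ℕ) (ℓ : ℝ≥0) : MCo M k ℓ →ₗ[ℤ] MCo M (k + 1) ℓ where
  toFun φ := fun s => ∑ j : Fin k, (-1 : ℤ) ^ (j.val + 1) *
      (if h : M.FaceOK s j then φ (M.face s j h) else 0)
  map_add' φ ψ := by
    funext s
    simp only [Pi.add_apply]
    rw [← Finset.sum_add_distrib]
    refine Finset.sum_congr rfl fun j _ => ?_
    split <;> ring
  map_smul' z φ := by
    funext s
    simp only [Pi.smul_apply, smul_eq_mul, RingHom.id_apply]
    rw [Finset.mul_sum]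
    refine Finset.sum_congr rfl fun j _ => ?_
    split <;> ring

/-- Magnitude cocycles in bidegree `(k, ℓ)`. -/
def MCocycle (M : GMS X) (k : ℕ) (ℓ : ℝ≥0) : Submodule ℤ (MCo M k ℓ) :=
  LinearMap.ker (MCoDelta M k ℓ)

/-- Magnitude coboundaries in bidegree `(k, ℓ)` (zero in degree `0`). -/
def MCobound (M : GMS X) : (k : ℕ) → (ℓ : ℝ≥0) → Submodule ℤ (MCo M k ℓ)
  | 0, _ => ⊥
  | (k + 1), ℓ => LinearMap.range (MCoDelta M k ℓ)

/-- The magnitude cohomology group `MH^k_ℓ(X)`: cocycles modulo coboundaries. -/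
abbrev MagCohomology (M : GMS X) (k : ℕ) (ℓ : ℝ≥0) :=
  MCocycle M k ℓ ⧸ (MCobound M k ℓ).comap (MCocycle M k ℓ).subtype

/-- The cohomology class of a cochain (zero if it is not a cocycle). -/
def cohClass (M : GMS X) {k : ℕ} {ℓ : ℝ≥0} (φ : MCo M k ℓ) : MagCohomology M k ℓ :=
  if h : φ ∈ MCocycle M k ℓ then Submodule.Quotient.mk ⟨φ, h⟩ else 0

/-- A representative cocycle of a magnitude cohomology class. -/
def MHout (M : GMS X) {k : ℕ} {ℓ : ℝ≥0} (α : MagCohomology M k ℓ) : MCo M k ℓ :=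
  ((Submodule.Quotient.mk_surjective _) α).choose.val

/-- The first `j+1` points of a `(j+k)`-simplex. -/
def frontT (j k : ℕ) (x : Fin (j + k + 1) → X) : Fin (j + 1) → X :=
  fun i => x ⟨i.val, by have := i.isLt; omega⟩

/-- The last `k+1` points of a `(j+k)`-simplex. -/
def backT (j k : ℕ) (x : Fin (j + k + 1) → X) : Fin (k + 1) → X :=
  fun i => x ⟨j + i.val, by have := i.isLt; omega⟩

lemma SepTuple.front {j k : ℕ} {x : Fin (j + k + 1) → X} (h : SepTuple x) :
    SepTuple (frontT j k x) := by
  intro i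
  have hi := i.isLt
  exact h ⟨i.val, by omega⟩

lemma SepTuple.back {j k : ℕ} {x : Fin (j + k + 1) → X} (h : SepTuple x) :
    SepTuple (backT j k x) := by
  intro i
  have hi := i.isLt
  exact h ⟨j + i.val, by omega⟩

/-- The product of magnitude cochains:
`(φ·ψ)(x_0,…,x_{j+k}) = φ(x_0,…,x_j) · ψ(x_j,…,x_{j+k})`,
where a cochain of length-degree `ℓ` vanishes on simplices of other lengths. -/
def MCup (M : GMS X) {j k : ℕ} {ℓ m : ℝ≥0} (φ : MCo M j ℓ) (ψ : MCo M k m) :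
    MCo M (j + k) (ℓ + m) :=
  fun s =>
    if h : M.len (frontT j k s.pts) = (ℓ : ℝ≥0∞) ∧ M.len (backT j k s.pts) = (m : ℝ≥0∞) then
      φ ⟨frontT j k s.pts, s.sep.front, h.1⟩ * ψ ⟨backT j k s.pts, s.sep.back, h.2⟩
    else 0

/-- The unit cochain `u ∈ MC^0_0`, with `u(x_0) = 1`. -/
def MCoUnit (M : GMS X) : MCo M 0 0 := fun _ => 1

/-- Transport of magnitude cohomology classes along equalities of bidegrees. -/
def MHcast (M : GMS X) {k k' : ℕ} {ℓ ℓ' : ℝ≥0} (hk : k = k') (hl : ℓ = ℓ')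
    (α : MagCohomology M k ℓ) : MagCohomology M k' ℓ' := hk ▸ hl ▸ α

/-- Transport of magnitude cochains along equalities of bidegrees. -/
def MCoCast (M : GMS X) {k k' : ℕ} {ℓ ℓ' : ℝ≥0} (hk : k = k') (hl : ℓ = ℓ')
    (φ : MCo M k ℓ) : MCo M k' ℓ' := hk ▸ hl ▸ φ

/-- The product on magnitude cohomology induced by the product of cochains. -/
def MHmul (M : GMS X) {j k : ℕ} {ℓ m : ℝ≥0} (α : MagCohomology M j ℓ)
    (β : MagCohomology M k m) : MagCohomology M (j + k) (ℓ + m) :=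
  cohClass M (MCup M (MHout M α) (MHout M β))

/-- The unit of the magnitude cohomology ring. -/
def MHone (M : GMS X) : MagCohomology M 0 0 := cohClass M (MCoUnit M)

/-- Two points are adjacent: their distance is nonzero and finite, and no
third point lies strictly between them. -/
def GMS.Adjacent (M : GMS X) (x y : X) : Prop :=
  M.d x y ≠ 0 ∧ M.d x y ≠ ∞ ∧ ∀ a, M.d x y = M.d x a + M.d a y → a = x ∨ a = y

/-- An isomorphism of magnitude cohomology rings: a family of additive
isomorphisms respecting both gradings, the product, and the unit. -/
def MHRingIso {Y : Type*} (M : GMS X) (M' : GMS Y) : Prop :=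
  ∃ e : ∀ (k : ℕ) (ℓ : ℝ≥0), MagCohomology M k ℓ ≃+ MagCohomology M' k ℓ,
    (e 0 0 (MHone M) = MHone M') ∧
    ∀ (j k : ℕ) (ℓ m : ℝ≥0) (α : MagCohomology M j ℓ) (β : MagCohomology M k m),
      e (j + k) (ℓ + m) (MHmul M α β) = MHmul M' (e j ℓ α) (e k m β)


/-- An idempotent of the ring `MH^0_0(X)`. -/
def MHIdem (M : GMS X) (e : MagCohomology M 0 0) : Prop :=
  MHmul M e e = MHcast M (by norm_num) (by norm_num) e

/-- A primitive idempotent of the ring `MH^0_0(X)`: a nonzero idempotent that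
is not the sum of two nonzero orthogonal idempotents. -/
def MHPrimIdem (M : GMS X) (e : MagCohomology M 0 0) : Prop :=
  e ≠ 0 ∧ MHIdem M e ∧
    ¬ ∃ e₁ e₂ : MagCohomology M 0 0, e₁ ≠ 0 ∧ e₂ ≠ 0 ∧ MHIdem M e₁ ∧ MHIdem M e₂ ∧
      MHmul M e₁ e₂ = 0 ∧ MHmul M e₂ e₁ = 0 ∧ e = e₁ + e₂

/-- The class `ε_x ∈ MH^0_0(X)` of the cochain `δ_x`. -/
def eps (M : GMS X) (x : X) : MagCohomology M 0 0 :=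
  cohClass M (fun s : MSimplex M 0 0 => if s.pts 0 = x then 1 else 0)

section Aux
variable {X : Type*} (M : GMS X)

theorem msimplex_ext {k : ℕ} {l : ℝ≥0} {s t : MSimplex M k l} (h : s.pts = t.pts) : s = t := by
  cases s; cases t; cases h; rfl

theorem len_one (p : Fin 1 → X) : M.len p = 0 := by simp [GMS.len]

theorem len_two (p : Fin 2 → X) : M.len p = M.d (p 0) (p 1) := by
  simp [GMS.len, Fin.sum_univ_one]

theorem len_three (p : Fin 3 → X) : M.len p = M.d (p 0) (p 1) + M.d (p 1) (p 2) := by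
  simp [GMS.len, Fin.sum_univ_two]

def pt (x : X) : MSimplex M 0 0 :=
  ⟨fun _ => x, fun i => i.elim0, by simp [GMS.len]⟩

theorem pt_eq (s : MSimplex M 0 0) : s = pt M (s.pts 0) := by
  apply msimplex_ext
  funext i
  have : i = 0 := Fin.eq_zero i
  rw [this]; rfl

theorem mem_cocycle_iff {k : ℕ} {l : ℝ≥0} (φ : MCo M k l) :
    φ ∈ MCocycle M k l ↔ ∀ s, MCoDelta M k l φ s = 0 := by
  rw [MCocycle, LinearMap.mem_ker]
  exact funext_iff

theorem cocycle_zero_all (hq : M.Quasi) (l : ℝ≥0) (hl : l = 0) (φ : MCo M 0 l) :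
    φ ∈ MCocycle M 0 l := by
  rw [mem_cocycle_iff]
  intro s
  exfalso
  have h1 := s.len_eq
  have h2 : M.len s.pts = M.d (s.pts 0) (s.pts 1) := len_two M s.pts
  refine s.sep 0 (hq _ _ ?_)
  have : M.d (s.pts 0) (s.pts 1) = 0 := by rw [← h2, h1, hl]; simp
  exact this

theorem delta_deg_zero (l : ℝ≥0) (φ : MCo M 0 l) : MCoDelta M 0 l φ = 0 := by
  funext s
  simp [MCoDelta]

theorem cobound_bot_one (l : ℝ≥0) : MCobound M 1 l = ⊥ := by
  rw [eq_bot_iff]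
  rintro x ⟨φ, rfl⟩
  rw [delta_deg_zero]
  exact Submodule.zero_mem _

end Aux
section Aux2
variable {X : Type*} (M : GMS X)

theorem comap_bot {k : ℕ} {l : ℝ≥0} (hbot : MCobound M k l = ⊥) :
    (MCobound M k l).comap (MCocycle M k l).subtype = ⊥ := by
  rw [hbot, Submodule.comap_bot, Submodule.ker_subtype]

theorem mk_inj {k : ℕ} {l : ℝ≥0} (hbot : MCobound M k l = ⊥) :
    Function.Injective
      (Submodule.Quotient.mk (p := (MCobound M k l).comap (MCocycle M k l).subtype)) := by
  intro a b h
  have h2 := (Submodule.Quotient.eq _).mp h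
  rw [comap_bot M hbot] at h2
  have := Submodule.mem_bot (R := ℤ) |>.mp h2
  exact sub_eq_zero.mp this

theorem MHout_mem {k : ℕ} {l : ℝ≥0} (α : MagCohomology M k l) : MHout M α ∈ MCocycle M k l :=
  ((Submodule.Quotient.mk_surjective _) α).choose.2

theorem mk_MHout {k : ℕ} {l : ℝ≥0} (α : MagCohomology M k l) :
    (Submodule.Quotient.mk ⟨MHout M α, MHout_mem M α⟩ : MagCohomology M k l) = α :=
  ((Submodule.Quotient.mk_surjective _) α).choose_spec

theorem cohClass_MHout {k : ℕ} {l : ℝ≥0} (α : MagCohomology M k l) :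
    cohClass M (MHout M α) = α := by
  rw [cohClass, dif_pos (MHout_mem M α)]
  exact mk_MHout M α

theorem cohClass_mem {k : ℕ} {l : ℝ≥0} {φ : MCo M k l} (h : φ ∈ MCocycle M k l) :
    cohClass M φ = Submodule.Quotient.mk ⟨φ, h⟩ := dif_pos h

theorem MHout_cohClass {k : ℕ} {l : ℝ≥0} (hbot : MCobound M k l = ⊥) {φ : MCo M k l}
    (h : φ ∈ MCocycle M k l) : MHout M (cohClass M φ) = φ := by
  have h2 : (⟨MHout M (cohClass M φ), MHout_mem M _⟩ : MCocycle M k l) = ⟨φ, h⟩ :=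
    mk_inj M hbot (by rw [mk_MHout, cohClass_mem M h])
  exact congrArg Subtype.val h2

theorem cohClass_eq_zero_iff {k : ℕ} {l : ℝ≥0} (hbot : MCobound M k l = ⊥) {φ : MCo M k l}
    (h : φ ∈ MCocycle M k l) : cohClass M φ = 0 ↔ φ = 0 := by
  rw [cohClass_mem M h, Submodule.Quotient.mk_eq_zero, comap_bot M hbot]
  simp [Submodule.mem_bot]

theorem cohClass_add {k : ℕ} {l : ℝ≥0} {φ ψ : MCo M k l} (h1 : φ ∈ MCocycle M k l)
    (h2 : ψ ∈ MCocycle M k l) : cohClass M (φ + ψ) = cohClass M φ + cohClass M ψ := by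
  rw [cohClass_mem M h1, cohClass_mem M h2, cohClass_mem M (add_mem h1 h2),
    ← Submodule.Quotient.mk_add]
  rfl

theorem cohClass_zero {k : ℕ} {l : ℝ≥0} : cohClass M (0 : MCo M k l) = 0 := by
  rw [cohClass_mem M (zero_mem _)]
  exact Submodule.Quotient.mk_eq_zero _ |>.mpr (zero_mem _)

theorem MHout_eq_zero_iff {k : ℕ} {l : ℝ≥0} (hbot : MCobound M k l = ⊥)
    (α : MagCohomology M k l) : MHout M α = 0 ↔ α = 0 := by
  constructor
  · intro h
    rw [← cohClass_MHout M α, h, cohClass_zero]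
  · rintro rfl
    exact (cohClass_eq_zero_iff M hbot (MHout_mem M 0)).mp (cohClass_MHout M 0)

theorem MHcast_eq_zero_iff {k k' : ℕ} {l l' : ℝ≥0} (hk : k = k') (hl : l = l')
    (α : MagCohomology M k l) : MHcast M hk hl α = 0 ↔ α = 0 := by
  subst hk; subst hl; exact Iff.rfl

theorem MHcast_cohClass {k k' : ℕ} {l l' : ℝ≥0} (hk : k = k') (hl : l = l')
    (φ : MCo M k l) : MHcast M hk hl (cohClass M φ) = cohClass M (MCoCast M hk hl φ) := by
  subst hk; subst hl; rfl

theorem MCoCast_apply {k : ℕ} {l l' : ℝ≥0} (hk : k = k) (hl : l = l') (φ : MCo M k l)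
    (s : MSimplex M k l') :
    MCoCast M hk hl φ s = φ ⟨s.pts, s.sep, by rw [hl]; exact s.len_eq⟩ := by
  subst hl
  have h : hk = rfl := rfl
  rw [h]
  rfl

end Aux2
section Aux3
variable {X : Type*} (M : GMS X)

theorem cohClass_inj {k : ℕ} {l : ℝ≥0} (hbot : MCobound M k l = ⊥) {φ ψ : MCo M k l}
    (h1 : φ ∈ MCocycle M k l) (h2 : ψ ∈ MCocycle M k l)
    (h : cohClass M φ = cohClass M ψ) : φ = ψ := by
  rw [cohClass_mem M h1, cohClass_mem M h2] at h
  exact congrArg Subtype.val (mk_inj M hbot h)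

theorem MHout_add {k : ℕ} {l : ℝ≥0} (hbot : MCobound M k l = ⊥)
    (a b : MagCohomology M k l) : MHout M (a + b) = MHout M a + MHout M b := by
  refine cohClass_inj M hbot (MHout_mem M _) (add_mem (MHout_mem M a) (MHout_mem M b)) ?_
  rw [cohClass_MHout, cohClass_add M (MHout_mem M a) (MHout_mem M b),
    cohClass_MHout, cohClass_MHout]

theorem MHmul_def {j k : ℕ} {l m : ℝ≥0} (a : MagCohomology M j l) (b : MagCohomology M k m) :
    MHmul M a b = cohClass M (MCup M (MHout M a) (MHout M b)) := rfl

theorem hbot00 : MCobound M (0 + 0) ((0 : ℝ≥0) + 0) = ⊥ := rfl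

theorem coc00 (hq : M.Quasi) (φ : MCo M (0 + 0) ((0 : ℝ≥0) + 0)) :
    φ ∈ MCocycle M (0 + 0) ((0 : ℝ≥0) + 0) :=
  cocycle_zero_all M hq (0 + 0) (by norm_num) φ

/-- Evaluate a `(0,0)`-cup product. -/
theorem cup00 (g h : MCo M 0 0) (s : MSimplex M (0 + 0) ((0 : ℝ≥0) + 0)) :
    MCup M g h s = g (pt M (s.pts 0)) * h (pt M (s.pts 0)) := by
  have hc : M.len (frontT 0 0 s.pts) = ((0 : ℝ≥0) : ℝ≥0∞) ∧
      M.len (backT 0 0 s.pts) = ((0 : ℝ≥0) : ℝ≥0∞) :=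
    ⟨(len_one M _).trans (by simp), (len_one M _).trans (by simp)⟩
  show (if h' : _ then _ else _) = _
  rw [dif_pos hc]
  congr 1
  · exact congrArg g (by
      refine (pt_eq M _).trans ?_
      rfl)
  · exact congrArg h (by
      refine (pt_eq M _).trans ?_
      rfl)

def lift00 (t : MSimplex M 0 0) : MSimplex M (0 + 0) ((0 : ℝ≥0) + 0) :=
  ⟨t.pts, t.sep, by rw [t.len_eq]; simp⟩

theorem lift00_pt (t : MSimplex M 0 0) : pt M ((lift00 M t).pts 0) = t :=
  (pt_eq M t).symm

theorem idem_iff (hq : M.Quasi) (e : MagCohomology M 0 0) :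
    MHIdem M e ↔ ∀ t : MSimplex M 0 0, MHout M e t * MHout M e t = MHout M e t := by
  have p1 : (0 : ℕ) = 0 + 0 := rfl
  have p2 : (0 : ℝ≥0) = 0 + 0 := (zero_add 0).symm
  have key : ∀ s : MSimplex M (0 + 0) ((0 : ℝ≥0) + 0),
      MCoCast M p1 p2 (MHout M e) s = MHout M e (pt M (s.pts 0)) := by
    intro s
    refine (MCoCast_apply M p1 p2 (MHout M e) s).trans ?_
    exact congrArg (MHout M e) (pt_eq M _)
  constructor
  · intro H t
    have H' : MHmul M e e = MHcast M p1 p2 e := H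
    have E0 : cohClass M (MCup M (MHout M e) (MHout M e)) =
        cohClass M (MCoCast M p1 p2 (MHout M e)) := by
      calc cohClass M (MCup M (MHout M e) (MHout M e)) = MHmul M e e :=
            (MHmul_def M e e).symm
        _ = MHcast M p1 p2 e := H'
        _ = MHcast M p1 p2 (cohClass M (MHout M e)) := by rw [cohClass_MHout]
        _ = cohClass M (MCoCast M p1 p2 (MHout M e)) := MHcast_cohClass M p1 p2 _
    have E : MCup M (MHout M e) (MHout M e) = MCoCast M p1 p2 (MHout M e) :=
      cohClass_inj M (hbot00 M) (coc00 M hq _) (coc00 M hq _) E0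
    have := congrFun E (lift00 M t)
    rw [cup00, key, lift00_pt] at this
    exact this
  · intro H
    show MHmul M e e = MHcast M p1 p2 e
    calc MHmul M e e = cohClass M (MCup M (MHout M e) (MHout M e)) := MHmul_def M e e
      _ = cohClass M (MCoCast M p1 p2 (MHout M e)) := by
          refine congrArg (cohClass M) (funext fun s => ?_)
          rw [cup00, key]
          exact H _
      _ = MHcast M p1 p2 (cohClass M (MHout M e)) := (MHcast_cohClass M p1 p2 _).symm
      _ = MHcast M p1 p2 e := by rw [cohClass_MHout]

theorem mul_zero_iff (hq : M.Quasi) (e₁ e₂ : MagCohomology M 0 0) :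
    MHmul M e₁ e₂ = 0 ↔ ∀ t : MSimplex M 0 0, MHout M e₁ t * MHout M e₂ t = 0 := by
  rw [MHmul_def, cohClass_eq_zero_iff M (hbot00 M) (coc00 M hq _), funext_iff]
  constructor
  · intro H t
    have := H (lift00 M t)
    rw [cup00, lift00_pt] at this
    exact this
  · intro H s
    rw [cup00]
    exact H _

end Aux3
section Aux4
variable {X : Type*} (M : GMS X)

/-- The delta cochain at `x`. -/
def Dc (x : X) : MCo M 0 0 := fun s => if s.pts 0 = x then 1 else 0

theorem hbot0 : MCobound M 0 0 = ⊥ := rfl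

theorem eps_def (x : X) : eps M x = cohClass M (Dc M x) := rfl

theorem coc0 (hq : M.Quasi) (φ : MCo M 0 0) : φ ∈ MCocycle M 0 0 :=
  cocycle_zero_all M hq 0 rfl φ

theorem MHout_eps (hq : M.Quasi) (x : X) : MHout M (eps M x) = Dc M x :=
  MHout_cohClass M (hbot0 M) (coc0 M hq _)

theorem pts0_inj {t t' : MSimplex M 0 0} (h : t.pts 0 = t'.pts 0) : t = t' := by
  rw [pt_eq M t, pt_eq M t', h]

theorem int_idem {m : ℤ} (h : m * m = m) : m = 0 ∨ m = 1 := by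
  have h2 : m * (m - 1) = 0 := by rw [mul_sub, mul_one, h, sub_self]
  rcases mul_eq_zero.mp h2 with h3 | h3
  · exact Or.inl h3
  · exact Or.inr (by omega)

theorem part1 (hq : M.Quasi) (x : X) : MHPrimIdem M (eps M x) := by
  refine ⟨?_, ?_, ?_⟩
  · intro h
    have h0 := (MHout_eq_zero_iff M (hbot0 M) (eps M x)).mpr h
    rw [MHout_eps M hq] at h0
    have := congrFun h0 (pt M x)
    simp [Dc, pt] at this
  · refine (idem_iff M hq _).mpr fun t => ?_
    rw [MHout_eps M hq]
    simp only [Dc]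
    split <;> norm_num
  · rintro ⟨e₁, e₂, h1, h2, hi1, hi2, ho12, ho21, hsum⟩
    have hg : Dc M x = MHout M e₁ + MHout M e₂ := by
      rw [← MHout_eps M hq x, hsum]
      exact MHout_add M (hbot0 M) e₁ e₂
    have hi1' := (idem_iff M hq e₁).mp hi1
    have hi2' := (idem_iff M hq e₂).mp hi2
    have ho12' := (mul_zero_iff M hq e₁ e₂).mp ho12
    have key : ∀ (i : Fin 2) t, (if i = 0 then MHout M e₁ else MHout M e₂) t ≠ 0 →
        t.pts 0 = x ∧ MHout M e₁ t + MHout M e₂ t = 1 := by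
      intro i t ht
      have hDx := congrFun hg t
      have h1' : MHout M e₁ t = 0 ∨ MHout M e₁ t = 1 := int_idem (hi1' t)
      have h2' : MHout M e₂ t = 0 ∨ MHout M e₂ t = 1 := int_idem (hi2' t)
      have ho := ho12' t
      have hsum1 : MHout M e₁ t + MHout M e₂ t = 1 := by
        fin_cases i <;> simp at ht <;>
        · rcases h1' with h1'' | h1'' <;> rcases h2' with h2'' | h2'' <;>
            simp [h1'', h2''] at ht ho ⊢
      refine ⟨?_, hsum1⟩
      by_contra hne
      simp only [Dc, Pi.add_apply, if_neg hne] at hDx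
      omega
    have hg1 : ∃ t, MHout M e₁ t ≠ 0 := by
      by_contra h
      push_neg at h
      exact h1 ((MHout_eq_zero_iff M (hbot0 M) e₁).mp (funext h))
    have hg2 : ∃ t, MHout M e₂ t ≠ 0 := by
      by_contra h
      push_neg at h
      exact h2 ((MHout_eq_zero_iff M (hbot0 M) e₂).mp (funext h))
    obtain ⟨t₁, ht1⟩ := hg1
    obtain ⟨t₂, ht2⟩ := hg2
    have k1 := key 0 t₁ (by simpa using ht1)
    have k2 := key 1 t₂ (by simpa using ht2)
    have : t₁ = t₂ := pts0_inj M (k1.1.trans k2.1.symm)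
    subst this
    have h1' : MHout M e₁ t₁ = 0 ∨ MHout M e₁ t₁ = 1 := int_idem (hi1' t₁)
    have h2' : MHout M e₂ t₁ = 0 ∨ MHout M e₂ t₁ = 1 := int_idem (hi2' t₁)
    have ho := ho12' t₁
    rcases h1' with h | h <;> rcases h2' with h' | h' <;> simp [h, h'] at ht1 ht2 ho

theorem part2 (hq : M.Quasi) : Function.Injective (eps M) := by
  intro x y h
  have hD : Dc M x = Dc M y := by
    rw [← MHout_eps M hq x, ← MHout_eps M hq y, h]
  have := congrFun hD (pt M x)
  simp only [Dc, pt] at this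
  by_contra hne
  simp only [if_true, if_neg hne] at this
  exact one_ne_zero (this.trans (if_neg hne))

theorem part3 (hq : M.Quasi) (e : MagCohomology M 0 0) (he : MHPrimIdem M e) :
    ∃ x : X, eps M x = e := by
  obtain ⟨hne, hid, hnsplit⟩ := he
  set g := MHout M e with hgdef
  have hidem : ∀ t, g t * g t = g t := (idem_iff M hq e).mp hid
  have hgne : ∃ t, g t ≠ 0 := by
    by_contra h
    push_neg at h
    exact hne ((MHout_eq_zero_iff M (hbot0 M) e).mp (funext h))
  obtain ⟨t₀, ht₀⟩ := hgne
  have hg0 : g t₀ = 1 := by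
    rcases int_idem (hidem t₀) with h | h
    · exact absurd h ht₀
    · exact h
  set x₀ := t₀.pts 0 with hx₀
  have hDt : ∀ t : MSimplex M 0 0, Dc M x₀ t = if t = t₀ then 1 else 0 := by
    intro t
    simp only [Dc]
    by_cases h : t = t₀
    · rw [if_pos h, if_pos (by rw [h])]
    · rw [if_neg h, if_neg (fun hc => h (pts0_inj M hc))]
  have hsupp : ∀ t, t ≠ t₀ → g t = 0 := by
    intro t₁ hne1
    by_contra ht1
    have hg1 : g t₁ = 1 := by
      rcases int_idem (hidem t₁) with h | h
      · exact absurd h ht1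
      · exact h
    refine hnsplit ⟨eps M x₀, cohClass M (g - Dc M x₀), ?_, ?_, ?_, ?_, ?_, ?_, ?_⟩
    · exact (part1 M hq x₀).1
    · intro h
      have h0 : g - Dc M x₀ = 0 := by
        have := (cohClass_eq_zero_iff M (hbot0 M) (coc0 M hq (g - Dc M x₀))).mp h
        exact this
      have := congrFun h0 t₁
      simp only [Pi.sub_apply, Pi.zero_apply, hDt, if_neg hne1, hg1] at this
      omega
    · exact (part1 M hq x₀).2.1
    · refine (idem_iff M hq _).mpr fun t => ?_
      rw [MHout_cohClass M (hbot0 M) (coc0 M hq _)]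
      simp only [Pi.sub_apply, hDt]
      by_cases h : t = t₀
      · rw [if_pos h, h, hg0]; ring
      · rw [if_neg h]
        have := hidem t
        ring_nf
        ring_nf at this
        omega
    · refine (mul_zero_iff M hq _ _).mpr fun t => ?_
      rw [MHout_eps M hq, MHout_cohClass M (hbot0 M) (coc0 M hq _)]
      simp only [Pi.sub_apply, hDt]
      by_cases h : t = t₀
      · rw [if_pos h, h, hg0]; ring
      · rw [if_neg h]; ring
    · refine (mul_zero_iff M hq _ _).mpr fun t => ?_
      rw [MHout_eps M hq, MHout_cohClass M (hbot0 M) (coc0 M hq _)]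
      simp only [Pi.sub_apply, hDt]
      by_cases h : t = t₀
      · rw [if_pos h, h, hg0]; ring
      · rw [if_neg h]; ring
    · have : e = cohClass M g := (cohClass_MHout M e).symm
      rw [this, eps_def, ← cohClass_add M (coc0 M hq _) (coc0 M hq _)]
      congr 1
      funext t
      simp only [Pi.add_apply, Pi.sub_apply]
      ring
  have hgD : g = Dc M x₀ := by
    funext t
    rw [hDt]
    by_cases h : t = t₀
    · rw [if_pos h, h, hg0]
    · rw [if_neg h, hsupp t h]
  exact ⟨x₀, by rw [eps_def, ← hgD, hgdef, cohClass_MHout]⟩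

end Aux4
section Aux5
variable {X : Type*} (M : GMS X)

theorem cohClass_not_mem {k : ℕ} {l : ℝ≥0} {φ : MCo M k l} (h : φ ∉ MCocycle M k l) :
    cohClass M φ = 0 := dif_neg h

theorem mem_cocycle_one_iff (l : ℝ≥0) (φ : MCo M 1 l) :
    φ ∈ MCocycle M 1 l ↔
      ∀ (s : MSimplex M 2 l) (h : M.FaceOK s 0), φ (M.face s 0 h) = 0 := by
  rw [mem_cocycle_iff]
  have hdelta : ∀ s : MSimplex M 2 l, MCoDelta M 1 l φ s =
      -(if h : M.FaceOK s 0 then φ (M.face s 0 h) else 0) := by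
    intro s
    show (∑ j : Fin 1, (-1 : ℤ) ^ (j.val + 1) *
      (if h : M.FaceOK s j then φ (M.face s j h) else 0)) = _
    rw [Fin.sum_univ_one]
    norm_num
    split <;> simp
  constructor
  · intro H s h
    have := H s
    rw [hdelta s, dif_pos h, neg_eq_zero] at this
    exact this
  · intro H s
    rw [hdelta s, neg_eq_zero]
    by_cases h : M.FaceOK s 0
    · rw [dif_pos h]; exact H s h
    · rw [dif_neg h]

/-- Front simplex of an inner cup factor. -/
def toS (l : ℝ≥0) (t : MSimplex M (1 + 0) (l + 0)) : MSimplex M 1 l :=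
  ⟨frontT 1 0 t.pts, t.sep.front, by
    have h4 : M.d (t.pts 0) (t.pts 1) = ((l + 0 : ℝ≥0) : ℝ≥0∞) :=
      (len_two M t.pts).symm.trans t.len_eq
    have h5 : ((l + 0 : ℝ≥0) : ℝ≥0∞) = ((l : ℝ≥0) : ℝ≥0∞) := by norm_num
    exact (len_two M (frontT 1 0 t.pts)).trans (h4.trans h5)⟩

/-- Back simplex of the outer cup. -/
def toT (l : ℝ≥0) (s : MSimplex M (0 + (1 + 0)) (0 + (l + 0))) :
    MSimplex M (1 + 0) (l + 0) :=
  ⟨backT 0 (1 + 0) s.pts, s.sep.back, by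
    have h4 : M.d (s.pts 0) (s.pts 1) = ((0 + (l + 0) : ℝ≥0) : ℝ≥0∞) :=
      (len_two M s.pts).symm.trans s.len_eq
    have h5 : ((0 + (l + 0) : ℝ≥0) : ℝ≥0∞) = ((l + 0 : ℝ≥0) : ℝ≥0∞) := by norm_num
    exact (len_two M (backT 0 (1 + 0) s.pts)).trans (h4.trans h5)⟩

theorem cupR (y : X) (l : ℝ≥0) (φ : MCo M 1 l) (t : MSimplex M (1 + 0) (l + 0)) :
    MCup M φ (Dc M y) t = φ (toS M l t) * (if t.pts 1 = y then 1 else 0) := by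
  have hfront : M.len (frontT 1 0 t.pts) = ((l : ℝ≥0) : ℝ≥0∞) := (toS M l t).len_eq
  have hback : M.len (backT 1 0 t.pts) = ((0 : ℝ≥0) : ℝ≥0∞) := (len_one M _).trans (by simp)
  show (if h' : _ then _ else _) = _
  rw [dif_pos ⟨hfront, hback⟩]
  rfl

theorem cupL (x : X) (l : ℝ≥0) (ψ : MCo M (1 + 0) (l + 0))
    (s : MSimplex M (0 + (1 + 0)) (0 + (l + 0))) :
    MCup M (Dc M x) ψ s = (if s.pts 0 = x then 1 else 0) * ψ (toT M l s) := by
  have hfront : M.len (frontT 0 (1 + 0) s.pts) = ((0 : ℝ≥0) : ℝ≥0∞) :=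
    (len_one M _).trans (by simp)
  have hback : M.len (backT 0 (1 + 0) s.pts) = ((l + 0 : ℝ≥0) : ℝ≥0∞) := (toT M l s).len_eq
  show (if h' : _ then _ else _) = _
  rw [dif_pos ⟨hfront, hback⟩]
  rfl

theorem inner_coc (y : X) (l : ℝ≥0) (φ : MCo M 1 l) (hφ : φ ∈ MCocycle M 1 l) :
    MCup M φ (Dc M y) ∈ MCocycle M (1 + 0) (l + 0) := by
  have hc : ((l + 0 : ℝ≥0) : ℝ≥0∞) = ((l : ℝ≥0) : ℝ≥0∞) := by norm_num
  refine (mem_cocycle_one_iff M (l + 0) (MCup M φ (Dc M y))).mpr ?_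
  intro u h
  rw [cupR M y l φ (M.face u 0 h)]
  by_cases hy : (M.face u 0 h).pts 1 = y
  · rw [if_pos hy, mul_one]
    have hu' : M.len u.pts = ((l : ℝ≥0) : ℝ≥0∞) := u.len_eq.trans hc
    set u' : MSimplex M 2 l := ⟨u.pts, u.sep, hu'⟩ with hu'def
    have h' : M.FaceOK u' 0 := ⟨h.1, h.2.1, h.2.2.trans hc⟩
    exact (mem_cocycle_one_iff M l φ).mp hφ u' h'
  · rw [if_neg hy, mul_zero]

theorem triple_eq (hq : M.Quasi) (x y : X) (l : ℝ≥0) (α : MagCohomology M 1 l)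
    (hψ : MCup M (MHout M α) (Dc M y) ∈ MCocycle M (1 + 0) (l + 0)) :
    MHmul M (eps M x) (MHmul M α (eps M y)) =
      cohClass M (MCup M (Dc M x) (MCup M (MHout M α) (Dc M y))) := by
  have E1 : MHout M (MHmul M α (eps M y)) = MCup M (MHout M α) (Dc M y) := by
    rw [MHmul_def M α (eps M y), MHout_eps M hq y]
    exact MHout_cohClass M (cobound_bot_one M (l + 0)) hψ
  calc MHmul M (eps M x) (MHmul M α (eps M y))
      = cohClass M (MCup M (MHout M (eps M x)) (MHout M (MHmul M α (eps M y)))) :=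
        MHmul_def M _ _
    _ = cohClass M (MCup M (Dc M x) (MCup M (MHout M α) (Dc M y))) := by
        rw [MHout_eps M hq x, E1]

/-- A triple tuple. -/
def tri (x a y : X) : Fin 3 → X := fun i => if i.val = 0 then x else if i.val = 1 then a else y

/-- A pair tuple. -/
def duo (x y : X) : Fin 2 → X := fun i => if i.val = 0 then x else y

end Aux5
section Aux6
variable {X : Type*} (M : GMS X)

/-- The delta cochain on the 1-simplex `(x, y)`. -/
def D1c (x y : X) (l : ℝ≥0) : MCo M 1 l :=
  fun s => if s.pts 0 = x ∧ s.pts 1 = y then 1 else 0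

theorem part4 (hq : M.Quasi) (x y : X) (l : ℝ≥0) (hl : 0 < l)
    (p1 : (0 + (1 + 0) : ℕ) = 1) (p2 : (0 + (l + 0) : ℝ≥0) = l) :
    (∃ α : MagCohomology M 1 l,
        MHcast M p1 p2 (MHmul M (eps M x) (MHmul M α (eps M y))) ≠
          (0 : MagCohomology M 1 l)) ↔
      (M.Adjacent x y ∧ M.d x y = (l : ℝ≥0∞)) := by
  have hbotchi : MCobound M (0 + (1 + 0)) (0 + (l + 0)) = ⊥ := cobound_bot_one M (0 + (l + 0))
  have hcoe : ((0 + (l + 0) : ℝ≥0) : ℝ≥0∞) = (l : ℝ≥0∞) := by norm_num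
  constructor
  · rintro ⟨α, hα⟩
    set φ := MHout M α with hφdef
    have hφ : φ ∈ MCocycle M 1 l := MHout_mem M α
    have hψc := inner_coc M y l φ hφ
    have Heq := triple_eq M hq x y l α hψc
    have hχcl : cohClass M (MCup M (Dc M x) (MCup M φ (Dc M y))) ≠ 0 := by
      intro h0
      apply hα
      rw [Heq, h0]
      exact (MHcast_eq_zero_iff M p1 p2 0).mpr rfl
    have hχcoc : MCup M (Dc M x) (MCup M φ (Dc M y)) ∈
        MCocycle M (0 + (1 + 0)) (0 + (l + 0)) := by
      by_contra hn
      exact hχcl (cohClass_not_mem M hn)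
    have hχne : MCup M (Dc M x) (MCup M φ (Dc M y)) ≠ 0 := by
      intro h0
      rw [h0] at hχcl
      exact hχcl (cohClass_zero M)
    obtain ⟨s, hs⟩ : ∃ s, MCup M (Dc M x) (MCup M φ (Dc M y)) s ≠ 0 := by
      by_contra hcon
      push_neg at hcon
      exact hχne (funext hcon)
    rw [cupL M x l _ s] at hs
    have hx0 : s.pts 0 = x := by
      by_contra h
      rw [if_neg h, zero_mul] at hs
      exact hs rfl
    rw [if_pos hx0, one_mul, cupR M y l φ (toT M l s)] at hs
    have hy0 : (toT M l s).pts 1 = y := by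
      by_contra h
      rw [if_neg h, mul_zero] at hs
      exact hs rfl
    rw [if_pos hy0, mul_one] at hs
    have hy0' : s.pts 1 = y := hy0
    have hdxy : M.d x y = (l : ℝ≥0∞) := by
      have h4 : M.d (s.pts 0) (s.pts 1) = ((0 + (l + 0) : ℝ≥0) : ℝ≥0∞) :=
        (len_two M s.pts).symm.trans s.len_eq
      rw [hx0, hy0'] at h4
      exact h4.trans hcoe
    have hne : x ≠ y := by
      intro h
      have hcontra : s.pts 0 = s.pts 1 := by rw [hx0, hy0', h]
      exact s.sep 0 hcontra
    refine ⟨⟨?_, ?_, ?_⟩, hdxy⟩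
    · rw [hdxy]; exact ENNReal.coe_ne_zero.mpr hl.ne'
    · rw [hdxy]; exact ENNReal.coe_ne_top
    · intro a hgeo
      by_contra hcon
      push_neg at hcon
      obtain ⟨hax, hay⟩ := hcon
      have hlen : M.len (tri x a y) = ((0 + (l + 0) : ℝ≥0) : ℝ≥0∞) := by
        have h3 : M.len (tri x a y) = M.d x a + M.d a y := len_three M (tri x a y)
        rw [h3, ← hgeo, hdxy, hcoe]
      have hsep : SepTuple (tri x a y) := by
        intro i
        rcases (by omega : i.val = 0 ∨ i.val = 1) with h | h
        · have hi : i = 0 := Fin.ext h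
          subst hi
          show x ≠ a
          exact fun hc => hax hc.symm
        · have hi : i = 1 := Fin.ext h
          subst hi
          show a ≠ y
          exact hay
      have hface : M.FaceOK (⟨tri x a y, hsep, hlen⟩ : MSimplex M 2 (0 + (l + 0))) 0 := by
        refine ⟨?_, ?_, ?_⟩
        · show M.d x y = M.d x a + M.d a y
          exact hgeo
        · intro i
          have hi : i = 0 := Fin.eq_zero i
          subst hi
          show x ≠ y
          exact hne
        · have h2 : M.len (faceTuple (tri x a y) 0) = M.d x y := len_two M _
          rw [h2, hdxy, hcoe]
      have hvan := (mem_cocycle_one_iff M (0 + (l + 0))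
        (MCup M (Dc M x) (MCup M φ (Dc M y)))).mp hχcoc ⟨tri x a y, hsep, hlen⟩ hface
      have hfs : M.face (⟨tri x a y, hsep, hlen⟩ : MSimplex M 2 (0 + (l + 0))) 0 hface = s := by
        apply msimplex_ext
        funext i
        rcases (by omega : i.val = 0 ∨ i.val = 1) with h | h
        · have hi : i = 0 := Fin.ext h
          subst hi
          show x = s.pts 0
          exact hx0.symm
        · have hi : i = 1 := Fin.ext h
          subst hi
          show y = s.pts 1
          exact hy0'.symm
      rw [hfs, cupL M x l _ s, if_pos hx0, one_mul, cupR M y l φ (toT M l s),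
        if_pos hy0, mul_one] at hvan
      exact hs hvan
  · rintro ⟨hadj, hdxy⟩
    have hne : x ≠ y := by
      intro h
      exact hadj.1 (by rw [h, M.d_self])
    have hD1coc : D1c M x y l ∈ MCocycle M 1 l := by
      refine (mem_cocycle_one_iff M l (D1c M x y l)).mpr ?_
      intro u h
      by_cases hc : (M.face u 0 h).pts 0 = x ∧ (M.face u 0 h).pts 1 = y
      · exfalso
        have e0 : u.pts 0 = x := hc.1
        have e2 : u.pts 2 = y := hc.2
        have hgeo : M.d x y = M.d x (u.pts 1) + M.d (u.pts 1) y := by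
          rw [← e0, ← e2]
          exact h.1
        rcases hadj.2.2 (u.pts 1) hgeo with h' | h'
        · exact (u.sep 0) (e0.trans h'.symm)
        · exact (u.sep 1) (h'.trans e2.symm)
      · show (if (M.face u 0 h).pts 0 = x ∧ (M.face u 0 h).pts 1 = y then (1 : ℤ) else 0) = 0
        rw [if_neg hc]
    have hφeq : MHout M (cohClass M (D1c M x y l)) = D1c M x y l :=
      MHout_cohClass M (cobound_bot_one M l) hD1coc
    have hψc : MCup M (MHout M (cohClass M (D1c M x y l))) (Dc M y) ∈
        MCocycle M (1 + 0) (l + 0) := by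
      rw [hφeq]
      exact inner_coc M y l (D1c M x y l) hD1coc
    have Heq := triple_eq M hq x y l (cohClass M (D1c M x y l)) hψc
    have Heq' : MHmul M (eps M x) (MHmul M (cohClass M (D1c M x y l)) (eps M y)) =
        cohClass M (MCup M (Dc M x) (MCup M (D1c M x y l) (Dc M y))) := by
      rw [Heq, hφeq]
    have hχcoc : MCup M (Dc M x) (MCup M (D1c M x y l) (Dc M y)) ∈
        MCocycle M (0 + (1 + 0)) (0 + (l + 0)) := by
      refine (mem_cocycle_one_iff M (0 + (l + 0))
        (MCup M (Dc M x) (MCup M (D1c M x y l) (Dc M y)))).mpr ?_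
      intro u h
      rw [cupL M x l _ (M.face u 0 h)]
      by_cases hcx : (M.face u 0 h).pts 0 = x
      case neg => rw [if_neg hcx, zero_mul]
      rw [if_pos hcx, one_mul, cupR M y l (D1c M x y l) (toT M l (M.face u 0 h))]
      by_cases hcy : (toT M l (M.face u 0 h)).pts 1 = y
      case neg => rw [if_neg hcy, mul_zero]
      exfalso
      have e0 : u.pts 0 = x := hcx
      have e2 : u.pts 2 = y := hcy
      have hgeo : M.d x y = M.d x (u.pts 1) + M.d (u.pts 1) y := by
        rw [← e0, ← e2]
        exact h.1
      rcases hadj.2.2 (u.pts 1) hgeo with h' | h'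
      · exact (u.sep 0) (e0.trans h'.symm)
      · exact (u.sep 1) (h'.trans e2.symm)
    have hslen : M.len (duo x y) = ((0 + (l + 0) : ℝ≥0) : ℝ≥0∞) := by
      have h2 : M.len (duo x y) = M.d x y := len_two M (duo x y)
      rw [h2, hdxy, hcoe]
    have hssep : SepTuple (duo x y) := by
      intro i
      have hi : i = 0 := Fin.eq_zero i
      subst hi
      show x ≠ y
      exact hne
    have hval : MCup M (Dc M x) (MCup M (D1c M x y l) (Dc M y))
        (⟨duo x y, hssep, hslen⟩ : MSimplex M (0 + (1 + 0)) (0 + (l + 0))) = 1 := by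
      rw [cupL M x l _ _, cupR M y l (D1c M x y l) _]
      rw [if_pos (show (⟨duo x y, hssep, hslen⟩ : MSimplex M (0 + (1 + 0))
        (0 + (l + 0))).pts 0 = x from rfl)]
      rw [if_pos (show (toT M l ⟨duo x y, hssep, hslen⟩).pts 1 = y from rfl)]
      have hD1val : D1c M x y l (toS M l (toT M l ⟨duo x y, hssep, hslen⟩)) = 1 := by
        show (if _ ∧ _ then (1 : ℤ) else 0) = 1
        rw [if_pos ⟨rfl, rfl⟩]
      rw [hD1val]
      norm_num
    have hχne0 : cohClass M (MCup M (Dc M x) (MCup M (D1c M x y l) (Dc M y))) ≠ 0 := by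
      intro h0
      have hz := (cohClass_eq_zero_iff M hbotchi hχcoc).mp h0
      rw [hz] at hval
      simp at hval
    refine ⟨cohClass M (D1c M x y l), ?_⟩
    intro hc
    apply hχne0
    rw [Heq'] at hc
    exact (MHcast_eq_zero_iff M p1 p2 _).mp hc

end Aux6
/-- For an extended quasi-metric space `X`, the map `x ↦ ε_x` is a bijection of
`X` onto the primitive idempotents of `MH^0_0(X)`; and for `ℓ ∈ (0,∞)`,
`ε_x · MH^1_ℓ(X) · ε_y ≠ 0` iff `x` and `y` are adjacent with `d(x,y) = ℓ`. -/
theorem primitive_idempotents (M : GMS X) (hq : M.Quasi) :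
    (∀ x : X, MHPrimIdem M (eps M x)) ∧
    Function.Injective (eps M) ∧
    (∀ e : MagCohomology M 0 0, MHPrimIdem M e → ∃ x : X, eps M x = e) ∧
    (∀ (x y : X) (ℓ : ℝ≥0), 0 < ℓ →
      ((∃ α : MagCohomology M 1 ℓ,
          MHcast M (by norm_num) (by norm_num)
            (MHmul M (eps M x) (MHmul M α (eps M y))) ≠ (0 : MagCohomology M 1 ℓ)) ↔
        (M.Adjacent x y ∧ M.d x y = (ℓ : ℝ≥0∞)))) := by
  refine ⟨part1 M hq, part2 M hq, part3 M hq, ?_⟩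
  intro x y ℓ hℓ
  exact part4 M hq x y ℓ hℓ _ _

end
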